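/- Let K be a compact subset of ℂ. The set of circularly accessible boundary points of K is dense in ∂K; that is, for every z ∈ ∂K and every δ > 0 there exists a point z' ∈ ∂K with |z − z'| < δ such that there exist c ∈ ℂ and r > 0 with the closed disk {u ∈ ℂ : |u − c| ≤ r} intersecting K exactly in {z'}. -/

import Mathlib

/-- The circularly accessible boundary points of a compact `K ⊆ ℂ` are dense in
`∂K`. -/
theorem circularly_accessible_dense (K : Set ℂ) (hK : IsCompact K) :
    ∀ z ∈ frontier K, ∀ δ : ℝ, 0 < δ →
      ∃ z' ∈ frontier K, ‖z - z'‖ < δ ∧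
        ∃ c : ℂ, ∃ r : ℝ, 0 < r ∧ Metric.closedBall c r ∩ K = {z'} := by
  intro z hz δ hδ
  have hKclosed : IsClosed K := hK.isClosed
  have hzK : z ∈ K := by
    have h := hz.1
    rwa [hKclosed.closure_eq] at h
  have hzcl : z ∈ closure Kᶜ := by
    rw [closure_compl]; exact hz.2
  obtain ⟨c, hcK, hcz⟩ := Metric.mem_closure_iff.mp hzcl (δ / 2) (by positivity)
  rw [Set.mem_compl_iff] at hcK
  have hKne : K.Nonempty := ⟨z, hzK⟩
  obtain ⟨z', hz'K, hz'd⟩ := hK.exists_infDist_eq_dist hKne c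
  set r := Metric.infDist c K with hr
  have hrpos : 0 < r := (hKclosed.notMem_iff_infDist_pos hKne).mp hcK
  have habs : ‖c - z'‖ = r := by
    rw [← Complex.dist_eq, ← hz'd]
  -- z' is a frontier point
  have hz'front : z' ∈ frontier K := by
    rw [frontier_eq_closure_inter_closure, hKclosed.closure_eq]
    refine ⟨hz'K, Metric.mem_closure_iff.mpr ?_⟩
    intro ε hε
    set s : ℝ := min (ε / (2 * r)) 1 with hs
    have hs0 : 0 < s := lt_min (by positivity) one_pos
    have hs1 : s ≤ 1 := min_le_right _ _
    refine ⟨z' + (s : ℂ) * (c - z'), ?_, ?_⟩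
    · rw [Set.mem_compl_iff]
      intro hmem
      have hle : r ≤ dist c (z' + (s : ℂ) * (c - z')) :=
        Metric.infDist_le_dist_of_mem hmem
      have hd : dist c (z' + (s : ℂ) * (c - z')) = (1 - s) * r := by
        rw [Complex.dist_eq]
        have he : c - (z' + (s : ℂ) * (c - z')) = ((1 - s : ℝ) : ℂ) * (c - z') := by
          push_cast; ring
        rw [he, norm_mul, habs, Complex.norm_real, Real.norm_eq_abs, abs_of_nonneg (by linarith)]
      rw [hd] at hle
      nlinarith
    · rw [Complex.dist_eq]
      have he : z' - (z' + (s : ℂ) * (c - z')) = -((s : ℝ) : ℂ) * (c - z') := by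
        push_cast; ring
      rw [he, norm_mul, habs]
      have : ‖(-((s : ℝ) : ℂ))‖ = s := by
        rw [norm_neg, Complex.norm_real, Real.norm_eq_abs, abs_of_nonneg hs0.le]
      rw [this]
      have hsr : s * r ≤ ε / 2 := by
        have h1 : s ≤ ε / (2 * r) := min_le_left _ _
        rw [le_div_iff₀ (by positivity)] at h1
        nlinarith
      linarith
  -- distance bound
  have hzz' : ‖z - z'‖ < δ := by
    rw [← Complex.dist_eq]
    have h1 : dist z z' ≤ dist z c + dist c z' := dist_triangle _ _ _
    have h2 : r ≤ dist c z := Metric.infDist_le_dist_of_mem hzK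
    rw [dist_comm] at h2
    rw [← hz'd] at h1
    linarith
  refine ⟨z', hz'front, hzz', (c + z') / 2, r / 2, by positivity, ?_⟩
  apply Set.eq_singleton_iff_unique_mem.mpr
  have hz'ball : dist z' ((c + z') / 2) = r / 2 := by
    rw [Complex.dist_eq]
    have he : z' - (c + z') / 2 = -(c - z') / 2 := by ring
    rw [he, norm_div, norm_neg, habs, Complex.norm_two]
  refine ⟨⟨Metric.mem_closedBall.mpr hz'ball.le, hz'K⟩, ?_⟩
  rintro u ⟨hub, huK⟩
  have hur : r ≤ dist c u := Metric.infDist_le_dist_of_mem huK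
  have h1 : dist u ((c + z') / 2) ≤ r / 2 := Metric.mem_closedBall.mp hub
  set a : ℂ := u - (c + z') / 2 with ha
  set b : ℂ := (c + z') / 2 - c with hb
  have hab : a + b = u - c := by rw [ha, hb]; ring
  have hnb : ‖b‖ = r / 2 := by
    have he : b = -(c - z') / 2 := by rw [hb]; ring
    rw [he, norm_div, norm_neg, habs, Complex.norm_two]
  have hnab : ‖a + b‖ = r := by
    rw [hab, ← Complex.dist_eq, dist_comm]
    apply le_antisymm _ hur
    have hcc : dist c ((c + z') / 2) = r / 2 := by
      rw [Complex.dist_eq]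
      have he : c - (c + z') / 2 = (c - z') / 2 := by ring
      rw [he, norm_div, habs, Complex.norm_two]
    calc dist c u ≤ dist c ((c + z') / 2) + dist ((c + z') / 2) u :=
          dist_triangle _ _ _
      _ ≤ r / 2 + r / 2 := by rw [hcc, dist_comm]; linarith
      _ = r := by ring
  have hna : ‖a‖ = r / 2 := by
    have hge : r ≤ ‖a‖ + ‖b‖ := hnab ▸ norm_add_le a b
    have hle : ‖a‖ ≤ r / 2 := by
      rw [ha, ← Complex.dist_eq]; exact h1
    rw [hnb] at hge; linarith
  have hray : SameRay ℝ a b := by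
    rw [sameRay_iff_norm_add, hnab, hna, hnb]; ring
  have heq : a = b := (sameRay_iff_of_norm_eq (by rw [hna, hnb])).mp hray
  rw [ha, hb] at heq
  have : u = z' := by linear_combination heq
  exact this
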